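/- Let G be a countable group acting measurably on a measurable space M in which all singletons are measurable, let μ be a non-degenerate probability measure on G, and let ν be a μ-stationary probability measure on M. If the orbit G·x of every point x ∈ M is infinite, then ν is continuous, i.e. ν({x}) = 0 for every x ∈ M. -/

import Mathlib

open MeasureTheory

/-- If a countable group `G` acts measurably on a measurable space `M` with all orbits
infinite, `μ` is a non-degenerate probability measure on `G` and `ν` is a `μ`-stationary
probability measure on `M`, then `ν` is continuous: every singleton has measure zero. -/
theorem stmt_13 {G M : Type*} [Group G] [Countable G]
    [MeasurableSpace M] [MeasurableSingletonClass M] [MulAction G M]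
    (hmeas : ∀ g : G, Measurable fun x : M => g • x)
    (μ : G → ENNReal) (hμ : ∑' g, μ g = 1)
    (hnd : ∀ g : G, ∃ L : List G, L ≠ [] ∧ (∀ x ∈ L, 0 < μ x) ∧ L.prod = g)
    (ν : Measure M) [IsProbabilityMeasure ν]
    (hstat : ∀ E : Set M, MeasurableSet E →
      ν E = ∑' g : G, μ g * ν ((fun x => g • x) ⁻¹' E))
    (horb : ∀ x : M, (MulAction.orbit G x).Infinite) :
    ∀ x : M, ν {x} = 0 := by
  classical
  by_contra h
  push_neg at h
  obtain ⟨x₀, hx₀⟩ := h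
  set c : ENNReal := ⨆ x : M, ν {x} with hc
  have hc1 : c ≤ 1 := iSup_le fun x => prob_le_one
  have hctop : c ≠ ⊤ := (hc1.trans_lt (by norm_num)).ne
  have hc0 : 0 < c := (pos_iff_ne_zero.mpr hx₀).trans_le (le_iSup (fun x : M => ν {x}) x₀)
  have hle : ∀ x : M, ν {x} ≤ c := fun x => le_iSup (fun x : M => ν {x}) x
  -- finiteness of large-atom sets
  have hfin : ∀ ε : ENNReal, ε ≠ 0 → {x : M | ε ≤ ν {x}}.Finite := by
    intro ε hε
    by_contra hinf
    set f := Set.Infinite.natEmbedding _ hinf with hf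
    have hdis : Pairwise (Function.onFun Disjoint fun n : ℕ => ({(f n : M)} : Set M)) := by
      intro i j hij
      refine Set.disjoint_singleton.mpr ?_
      exact fun h => hij (f.injective (Subtype.ext h))
    have h1 : ν (⋃ n : ℕ, ({(f n : M)} : Set M)) = ∑' n : ℕ, ν {(f n : M)} :=
      measure_iUnion hdis fun n => measurableSet_singleton _
    have h2 : (⊤ : ENNReal) ≤ ∑' n : ℕ, ν {(f n : M)} := by
      rw [← ENNReal.tsum_const_eq_top_of_ne_zero (α := ℕ) hε]
      exact ENNReal.tsum_le_tsum fun n => (f n).2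
    have h3 : ν (⋃ n : ℕ, ({(f n : M)} : Set M)) ≤ 1 := prob_le_one
    rw [h1] at h3
    exact absurd (h2.trans h3) (by norm_num)
  -- the sup is attained
  have hT : {x : M | c / 2 ≤ ν {x}}.Finite := hfin _ (by
    simp [ENNReal.div_eq_zero_iff, hc0.ne', hctop] )
  have hTne : {x : M | c / 2 ≤ ν {x}}.Nonempty := by
    have : c / 2 < c := ENNReal.half_lt_self hc0.ne' hctop
    obtain ⟨x, hx⟩ := lt_iSup_iff.mp (hc.symm ▸ this)
    exact ⟨x, hx.le⟩
  obtain ⟨a, haT, ha⟩ := Set.exists_max_image _ (fun x : M => ν {x}) hT hTne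
  have hca : ν {a} = c := by
    refine le_antisymm (hle a) (iSup_le fun x => ?_)
    by_cases hx : c / 2 ≤ ν {x}
    · exact ha x hx
    · exact (le_of_not_ge hx).trans haT
  -- the set of maximal atoms
  set A : Set M := {x : M | ν {x} = c} with hA
  have hAfin : A.Finite := hT.subset fun x hx => by
    simp only [hA, Set.mem_setOf_eq] at hx
    exact Set.mem_setOf_eq ▸ (hx ▸ ENNReal.half_le_self)
  -- invariance under inverses of support elements
  have hinv : ∀ g : G, μ g ≠ 0 → ∀ x ∈ A, g⁻¹ • x ∈ A := by
    intro g hg x hx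
    have hμle : ∀ k : G, μ k ≤ 1 := fun k => hμ ▸ ENNReal.le_tsum k
    have hpre : ∀ k : G, (fun y : M => k • y) ⁻¹' {x} = {k⁻¹ • x} := by
      intro k
      ext y
      simp [eq_inv_smul_iff, eq_comm]
    have hs := hstat {x} (measurableSet_singleton x)
    simp only [hpre] at hs
    have hbsum : ∑' k : G, μ k * c = c := by
      rw [ENNReal.tsum_mul_right, hμ, one_mul]
    by_contra hgx
    have hlt : ν {g⁻¹ • x} < c := lt_of_le_of_ne (hle _) hgx
    have hstrict : ∑' k : G, μ k * ν {k⁻¹ • x} < ∑' k : G, μ k * c := by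
      rw [ENNReal.tsum_eq_add_tsum_ite (f := fun k : G => μ k * ν {k⁻¹ • x}) g,
          ENNReal.tsum_eq_add_tsum_ite (f := fun k : G => μ k * c) g]
      have hrest : (∑' k : G, if k = g then 0 else μ k * ν {k⁻¹ • x}) ≤
          ∑' k : G, if k = g then 0 else μ k * c := by
        refine ENNReal.tsum_le_tsum fun k => ?_
        split
        · exact le_rfl
        · exact mul_le_mul_right (hle _) _
      have hresttop : (∑' k : G, if k = g then 0 else μ k * c) ≠ ⊤ := by
        refine ne_top_of_le_ne_top hctop (le_trans (ENNReal.tsum_le_tsum fun k => ?_) hbsum.le)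
        split
        · exact zero_le
        · exact le_rfl
      have hmul : μ g * ν {g⁻¹ • x} < μ g * c :=
        (ENNReal.mul_lt_mul_iff_right hg ((hμle g).trans_lt ENNReal.one_lt_top).ne).mpr hlt
      calc μ g * ν {g⁻¹ • x} + ∑' k : G, (if k = g then 0 else μ k * ν {k⁻¹ • x})
          ≤ μ g * ν {g⁻¹ • x} + ∑' k : G, (if k = g then 0 else μ k * c) :=
            add_le_add_right hrest _
        _ < μ g * c + ∑' k : G, (if k = g then 0 else μ k * c) :=
            ENNReal.add_lt_add_right hresttop hmul
    rw [hbsum] at hstrict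
    have : ν {x} < c := hs ▸ hstrict
    exact absurd hx (by simp [hA, this.ne])
  -- A is invariant under the whole group action
  have hlist : ∀ L : List G, (∀ g ∈ L, μ g ≠ 0) → ∀ x ∈ A, (L.prod)⁻¹ • x ∈ A := by
    intro L
    induction L with
    | nil => intro _ x hx; simpa using hx
    | cons g L ih =>
      intro hL x hx
      have h1 : g⁻¹ • x ∈ A := hinv g (hL g List.mem_cons_self) x hx
      have h2 := ih (fun k hk => hL k (List.mem_cons_of_mem g hk)) _ h1
      rw [List.prod_cons, mul_inv_rev, mul_smul]
      exact h2
  have horbA : MulAction.orbit G a ⊆ A := by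
    rintro _ ⟨h, rfl⟩
    obtain ⟨L, -, hLpos, hLprod⟩ := hnd h⁻¹
    have := hlist L (fun g hg => (hLpos g hg).ne') a (by simp [hA, hca])
    rwa [hLprod, inv_inv] at this
  exact (horb a) (hAfin.subset horbA)
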